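/- Let μ be a Borel probability measure on ℝ supported on (0, ∞) (i.e. μ((−∞,0]) = 0) with ∫ λ dμ(λ) < ∞, and suppose that (1 − ∫ λ^θ dμ(λ))/θ converges to a finite real limit as θ → 0⁺. Then (1/θ) ∫ (1 − λ^θ)² dμ(λ) → 0 as θ → 0⁺. -/
import Mathlib


open MeasureTheory Filter

lemma integrable_rpow_aux (μ : Measure ℝ) [IsProbabilityMeasure μ]
    (hsupp : μ (Set.Iic 0) = 0)
    (hmom : Integrable (fun x : ℝ => x) μ) {θ : ℝ} (h0 : 0 ≤ θ) (h1 : θ ≤ 1) :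
    Integrable (fun x : ℝ => x ^ θ) μ := by
  have hpos : ∀ᵐ x ∂μ, 0 < x := by
    rw [ae_iff]
    convert hsupp using 2
    ext x
    simp [not_lt]
  have hint : Integrable (fun x : ℝ => 1 + x) μ := (integrable_const 1).add hmom
  have hmeas : Measurable (fun x : ℝ => x ^ θ) := measurable_id.pow measurable_const
  refine hint.mono hmeas.aestronglyMeasurable ?_
  filter_upwards [hpos] with x hx
  rw [Real.norm_eq_abs, Real.norm_eq_abs, abs_of_pos (Real.rpow_pos_of_pos hx θ),
    abs_of_pos (by linarith : (0:ℝ) < 1 + x)]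
  rcases le_total x 1 with h | h
  · have : x ^ θ ≤ 1 := Real.rpow_le_one hx.le h h0
    linarith
  · have : x ^ θ ≤ x ^ (1:ℝ) := Real.rpow_le_rpow_of_exponent_le h h1
    rw [Real.rpow_one] at this
    linarith

/-- Let `μ` be a Borel probability measure on `ℝ` supported on `(0, ∞)` with finite
first moment, and suppose `(1 − ∫ λ^θ dμ)/θ` converges to a finite real limit as
`θ → 0⁺`.  Then `(1/θ) ∫ (1 − λ^θ)² dμ(λ) → 0` as `θ → 0⁺`. -/
theorem tendsto_integral_sq_one_sub_rpow (μ : Measure ℝ) [IsProbabilityMeasure μ]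
    (hsupp : μ (Set.Iic 0) = 0)
    (hmom : Integrable (fun x : ℝ => x) μ)
    (S : ℝ)
    (hlim : Tendsto (fun θ : ℝ => (1 - ∫ x, x ^ θ ∂μ) / θ)
      (nhdsWithin 0 (Set.Ioi 0)) (nhds S)) :
    Tendsto (fun θ : ℝ => θ⁻¹ * ∫ x, (1 - x ^ θ) ^ 2 ∂μ)
      (nhdsWithin 0 (Set.Ioi 0)) (nhds 0) := by
  have hpos : ∀ᵐ x ∂μ, 0 < x := by
    rw [ae_iff]
    convert hsupp using 2
    ext x
    simp [not_lt]
  -- fun θ => 2θ maps 𝓝[>]0 to 𝓝[>]0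
  have htwo : Tendsto (fun θ : ℝ => 2 * θ) (nhdsWithin 0 (Set.Ioi 0))
      (nhdsWithin 0 (Set.Ioi 0)) := by
    apply tendsto_nhdsWithin_of_tendsto_nhds_of_eventually_within
    · have : Tendsto (fun θ : ℝ => 2 * θ) (nhds 0) (nhds (2 * 0)) :=
        (continuous_const.mul continuous_id).tendsto 0
      simpa using this.mono_left nhdsWithin_le_nhds
    · filter_upwards [self_mem_nhdsWithin] with θ (hθ : 0 < θ)
      exact Set.mem_Ioi.mpr (by linarith)
  have hlim2 : Tendsto (fun θ : ℝ => (1 - ∫ x, x ^ (2 * θ) ∂μ) / (2 * θ))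
      (nhdsWithin 0 (Set.Ioi 0)) (nhds S) := hlim.comp htwo
  have hmain : Tendsto (fun θ : ℝ => 2 * ((1 - ∫ x, x ^ θ ∂μ) / θ)
      - 2 * ((1 - ∫ x, x ^ (2 * θ) ∂μ) / (2 * θ)))
      (nhdsWithin 0 (Set.Ioi 0)) (nhds (2 * S - 2 * S)) :=
    (hlim.const_mul 2).sub (hlim2.const_mul 2)
  rw [sub_self] at hmain
  refine hmain.congr' ?_
  have hsmall : ∀ᶠ θ : ℝ in nhdsWithin 0 (Set.Ioi 0), θ < 1/2 := by
    apply eventually_nhdsWithin_of_eventually_nhds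
    exact Filter.Tendsto.eventually_lt_const (by norm_num) tendsto_id
  filter_upwards [self_mem_nhdsWithin, hsmall] with θ (hθ : 0 < θ) hθ'
  have hI1 : Integrable (fun x : ℝ => x ^ θ) μ :=
    integrable_rpow_aux μ hsupp hmom hθ.le (by linarith)
  have hI2 : Integrable (fun x : ℝ => x ^ (2 * θ)) μ :=
    integrable_rpow_aux μ hsupp hmom (by linarith) (by linarith)
  have hcongr : ∫ x, (1 - x ^ θ) ^ 2 ∂μ
      = ∫ x, (1 - 2 * x ^ θ + x ^ (2 * θ)) ∂μ := by
    refine integral_congr_ae ?_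
    filter_upwards [hpos] with x hx
    have h2 : x ^ (2 * θ) = (x ^ θ) ^ 2 := by
      rw [← Real.rpow_natCast (x ^ θ) 2, ← Real.rpow_mul hx.le]
      norm_num
      ring_nf
    rw [h2]; ring
  have hsplit : ∫ x, (1 - 2 * x ^ θ + x ^ (2 * θ)) ∂μ
      = 1 - 2 * (∫ x, x ^ θ ∂μ) + ∫ x, x ^ (2 * θ) ∂μ := by
    have hI3 : Integrable (fun x : ℝ => 1 - 2 * x ^ θ) μ :=
      (integrable_const 1).sub (hI1.const_mul 2)
    have hI4 : Integrable (fun x : ℝ => (2:ℝ) * x ^ θ) μ := hI1.const_mul 2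
    rw [integral_add hI3 hI2, integral_sub (integrable_const 1) hI4,
      integral_const, integral_const_mul]
    simp
  rw [hcongr, hsplit]
  field_simp
  ring
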